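/- If two metric spaces X and Y are coarsely equivalent, then they have the same coarse entropy: h_∞(X) = h_∞(Y). -/

import Mathlib

open Filter Set Metric
open scoped ENNReal

noncomputable section

/-- `p` represents a `δ`-pseudoorbit of `f` of length `n` starting at `x₀`:
`(p 0, p 1, …, p n)` with `p 0 = x₀` and `dist (f (p i)) (p (i+1)) ≤ δ` for `i < n`.
(Only the values `p 0, …, p n` are relevant.) -/
def IsPseudoOrbit {X : Type*} [MetricSpace X] (f : X → X) (δ : ℝ) (n : ℕ) (x₀ : X)
    (p : ℕ → X) : Prop :=
  p 0 = x₀ ∧ ∀ i < n, dist (f (p i)) (p (i + 1)) ≤ δ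

/-- The distance between two pseudoorbits of length `n`:
the maximum of `dist (p i) (q i)` over `0 ≤ i ≤ n`. -/
def orbitDist {X : Type*} [MetricSpace X] (n : ℕ) (p q : ℕ → X) : ℝ :=
  (Finset.range (n + 1)).sup' (by simp) fun i => dist (p i) (q i)

/-- A family `S` of pseudoorbits of length `n` is `R`-separated if any two distinct
members are at pseudoorbit distance at least `R`. -/
def IsSepFamily {X : Type*} [MetricSpace X] (n : ℕ) (R : ℝ) (S : Set (ℕ → X)) : Prop :=
  ∀ p ∈ S, ∀ q ∈ S, p ≠ q → R ≤ orbitDist n p q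

/-- `sepCard f n R δ x₀` is `s(f,n,R,δ,x₀)`: the supremum of cardinalities of
`R`-separated sets of `δ`-pseudoorbits of `f` of length `n` starting at `x₀`. -/
def sepCard {X : Type*} [MetricSpace X] (f : X → X) (n : ℕ) (R δ : ℝ) (x₀ : X) : ℝ≥0∞ :=
  ⨆ (S : Set (ℕ → X)) (_ : ∀ p ∈ S, IsPseudoOrbit f δ n x₀ p) (_ : IsSepFamily n R S),
    (S.encard : ℝ≥0∞)

/-- Extended logarithm `[0,∞] → [0,∞]` (negative values are truncated to `0`). -/
def elog (x : ℝ≥0∞) : ℝ≥0∞ :=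
  if x = ⊤ then ⊤ else ENNReal.ofReal (Real.log x.toReal)

/-- The coarse entropy of `f : X → X` computed at the basepoint `x₀`:
`h_∞(f) = lim_{δ→∞} lim_{R→∞} limsup_{n→∞} (1/n) log s(f,n,R,δ,x₀)`.
Since `s` is nondecreasing in `δ` and nonincreasing in `R`, the limits in `δ` and `R`
are the supremum over `δ > 0` and the infimum over `R > 0`, respectively. -/
def coarseEntropyAt {X : Type*} [MetricSpace X] (f : X → X) (x₀ : X) : ℝ≥0∞ :=
  ⨆ (δ : ℝ) (_ : 0 < δ), ⨅ (R : ℝ) (_ : 0 < R),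
    Filter.atTop.limsup fun n : ℕ => elog (sepCard f n R δ x₀) / (n : ℝ≥0∞)

end

/-- `f : X → Y` is a coarse embedding: there are nondecreasing control functions
`ρ₋, ρ₊ : ℝ → ℝ` with `ρ₋ → ∞` and
`ρ₋(d(x,x')) ≤ d(f x, f x') ≤ ρ₊(d(x,x'))` for all `x, x'`. -/
def IsCoarseEmbedding {X Y : Type*} [MetricSpace X] [MetricSpace Y] (f : X → Y) : Prop :=
  ∃ ρminus ρplus : ℝ → ℝ, Monotone ρminus ∧ Monotone ρplus ∧
    Filter.Tendsto ρminus Filter.atTop Filter.atTop ∧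
    ∀ x x' : X, ρminus (dist x x') ≤ dist (f x) (f x') ∧
      dist (f x) (f x') ≤ ρplus (dist x x')

/-- `f : X → Y` is a coarse equivalence: a coarse embedding with coarsely dense image. -/
def IsCoarseEquiv {X Y : Type*} [MetricSpace X] [MetricSpace Y] (f : X → Y) : Prop :=
  IsCoarseEmbedding f ∧ ∃ A : ℝ, 0 ≤ A ∧ ∀ y : Y, ∃ x : X, dist y (f x) < A

section Aux

variable {X Y : Type*} [MetricSpace X] [MetricSpace Y]

lemma elog_mono : Monotone elog := by
  intro a b hab
  unfold elog
  by_cases hb : b = ⊤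
  · simp [hb]
  have ha : a ≠ ⊤ := fun h => hb (top_le_iff.mp (h ▸ hab))
  rw [if_neg ha, if_neg hb]
  by_cases h1 : a.toReal ≤ 1
  · rw [ENNReal.ofReal_eq_zero.mpr (Real.log_nonpos ENNReal.toReal_nonneg h1)]
    exact zero_le
  · push_neg at h1
    exact ENNReal.ofReal_le_ofReal
      (Real.log_le_log (lt_trans one_pos h1) (ENNReal.toReal_mono hb hab))

lemma exists_index_of_le_orbitDist {n : ℕ} {p q : ℕ → X} {R : ℝ}
    (h : R ≤ orbitDist n p q) : ∃ i ≤ n, R ≤ dist (p i) (q i) := by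
  obtain ⟨i, hi, hEq⟩ := Finset.exists_mem_eq_sup' (α := ℝ)
    (s := Finset.range (n + 1)) (by simp) (fun i => dist (p i) (q i))
  exact ⟨i, Nat.lt_succ_iff.mp (Finset.mem_range.mp hi), by
    rw [orbitDist, hEq] at h; exact h⟩

lemma dist_le_orbitDist {n : ℕ} (p q : ℕ → X) {i : ℕ} (hi : i ≤ n) :
    dist (p i) (q i) ≤ orbitDist n p q := by
  unfold orbitDist
  exact Finset.le_sup' (fun i => dist (p i) (q i)) (Finset.mem_range.mpr (Nat.lt_succ_iff.mpr hi))

/-- Key cardinality comparison lemma. -/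
lemma sepCard_le_sepCard (g : X → Y) (x₀ : X) (y₀ : Y) {δ δ' R R' : ℝ}
    (hR : 0 < R) (hR' : 0 < R')
    (h1 : ∀ x : X, dist x₀ x ≤ δ → dist y₀ (g x) ≤ δ')
    (h2 : ∀ x x' : X, dist x x' ≤ δ → dist (g x) (g x') ≤ δ')
    (h3 : ∀ x x' : X, R ≤ dist x x' → R' ≤ dist (g x) (g x')) (n : ℕ) :
    sepCard (id : X → X) n R δ x₀ ≤ sepCard (id : Y → Y) n R' δ' y₀ := by
  rw [sepCard]
  refine iSup_le fun S => iSup_le fun hS => iSup_le fun hsep => ?_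
  set Φ : (ℕ → X) → (ℕ → Y) := fun p i => if i = 0 then y₀ else g (p i) with hΦ
  -- key separation fact
  have key : ∀ p ∈ S, ∀ p' ∈ S, p ≠ p' → ∃ i, i ≤ n ∧ i ≠ 0 ∧ R' ≤ dist (Φ p i) (Φ p' i) := by
    intro p hp p' hp' hne
    obtain ⟨i, hi, hRi⟩ := exists_index_of_le_orbitDist (hsep p hp p' hp' hne)
    have hi0 : i ≠ 0 := by
      rintro rfl
      rw [(hS p hp).1, (hS p' hp').1, dist_self] at hRi
      exact absurd hRi (not_le.mpr hR)
    refine ⟨i, hi, hi0, ?_⟩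
    simpa [hΦ, hi0] using h3 (p i) (p' i) hRi
  have hinj : Set.InjOn Φ S := by
    intro p hp p' hp' hEq
    by_contra hne
    obtain ⟨i, _, _, hRi⟩ := key p hp p' hp' hne
    rw [hEq, dist_self] at hRi
    exact absurd hRi (not_le.mpr hR')
  have hcard : (Φ '' S).encard = S.encard := hinj.encard_image
  have hT : ∀ q ∈ Φ '' S, IsPseudoOrbit (id : Y → Y) δ' n y₀ q := by
    rintro q ⟨p, hp, rfl⟩
    obtain ⟨hp0, hpstep⟩ := hS p hp
    refine ⟨by simp [hΦ], fun i hin => ?_⟩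
    rcases Nat.eq_zero_or_pos i with rfl | hipos
    · have : dist x₀ (p 1) ≤ δ := by
        have := hpstep 0 hin; rw [id_eq, hp0] at this; exact this
      simpa [hΦ] using h1 (p 1) this
    · have : dist (p i) (p (i + 1)) ≤ δ := by simpa using hpstep i hin
      have hne : i ≠ 0 := Nat.pos_iff_ne_zero.mp hipos
      simpa [hΦ, hne] using h2 (p i) (p (i + 1)) this
  have hTsep : IsSepFamily n R' (Φ '' S) := by
    rintro q ⟨p, hp, rfl⟩ q' ⟨p', hp', rfl⟩ hne
    have hne' : p ≠ p' := fun h => hne (h ▸ rfl)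
    obtain ⟨i, hin, _, hRi⟩ := key p hp p' hp' hne'
    exact le_trans hRi (dist_le_orbitDist _ _ hin)
  calc (S.encard : ℝ≥0∞) = ((Φ '' S).encard : ℝ≥0∞) := by rw [hcard]
    _ ≤ sepCard (id : Y → Y) n R' δ' y₀ := by
        rw [sepCard]
        exact le_iSup_of_le (Φ '' S) (le_iSup_of_le hT (le_iSup_of_le hTsep le_rfl))

/-- Abstract entropy comparison from sepCard comparison. -/
lemma coarseEntropyAt_le (x₀ : X) (y₀ : Y)
    (H : ∀ δ : ℝ, 0 < δ → ∃ δ' : ℝ, 0 < δ' ∧ ∀ R' : ℝ, 0 < R' → ∃ R : ℝ, 0 < R ∧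
      ∀ n : ℕ, sepCard (id : X → X) n R δ x₀ ≤ sepCard (id : Y → Y) n R' δ' y₀) :
    coarseEntropyAt (id : X → X) x₀ ≤ coarseEntropyAt (id : Y → Y) y₀ := by
  rw [coarseEntropyAt, coarseEntropyAt]
  refine iSup_le fun δ => iSup_le fun hδ => ?_
  obtain ⟨δ', hδ', H2⟩ := H δ hδ
  refine le_iSup_of_le δ' (le_iSup_of_le hδ' ?_)
  refine le_iInf fun R' => le_iInf fun hR' => ?_
  obtain ⟨R, hR, hle⟩ := H2 R' hR'
  refine le_trans (iInf_le_of_le R (iInf_le_of_le hR le_rfl)) ?_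
  refine Filter.limsup_le_limsup (Filter.Eventually.of_forall fun n => ?_)
  exact ENNReal.div_le_div_right (elog_mono (hle n)) _

lemma dir_fwd (f : X → Y) (hf : IsCoarseEmbedding f) (x₀ : X) (y₀ : Y) :
    coarseEntropyAt (id : X → X) x₀ ≤ coarseEntropyAt (id : Y → Y) y₀ := by
  obtain ⟨ρm, ρp, hm, hp, htend, hbound⟩ := hf
  refine coarseEntropyAt_le x₀ y₀ fun δ hδ => ?_
  have hρp0 : 0 ≤ ρp δ := by
    have h0 : (0:ℝ) ≤ ρp 0 := by
      have := (hbound x₀ x₀).2; simpa using le_trans dist_nonneg this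
    exact le_trans h0 (hp (le_of_lt hδ))
  refine ⟨dist y₀ (f x₀) + ρp δ + 1, by positivity, fun R' hR' => ?_⟩
  obtain ⟨R₀, hR₀⟩ := (Filter.tendsto_atTop.mp htend R').exists_forall_of_atTop
  refine ⟨max R₀ 1, lt_of_lt_of_le one_pos (le_max_right _ _), fun n => ?_⟩
  refine sepCard_le_sepCard f x₀ y₀ (lt_of_lt_of_le one_pos (le_max_right _ _)) hR'
    (fun x hx => ?_) (fun x x' hx => ?_) (fun x x' hx => ?_) n
  · calc dist y₀ (f x) ≤ dist y₀ (f x₀) + dist (f x₀) (f x) := dist_triangle _ _ _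
      _ ≤ dist y₀ (f x₀) + ρp δ := by
          have := (hbound x₀ x).2
          exact add_le_add_right (le_trans this (hp hx)) _
      _ ≤ dist y₀ (f x₀) + ρp δ + 1 := by linarith
  · calc dist (f x) (f x') ≤ ρp (dist x x') := (hbound x x').2
      _ ≤ ρp δ := hp hx
      _ ≤ dist y₀ (f x₀) + ρp δ + 1 := by
          have := dist_nonneg (x := y₀) (y := f x₀); linarith
  · have h1 : R₀ ≤ dist x x' := le_trans (le_max_left _ _) hx
    calc R' ≤ ρm (dist x x') := hR₀ _ h1
      _ ≤ dist (f x) (f x') := (hbound x x').1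

lemma dir_bwd (f : X → Y) (hf : IsCoarseEquiv f) (x₀ : X) (y₀ : Y) :
    coarseEntropyAt (id : Y → Y) y₀ ≤ coarseEntropyAt (id : X → X) x₀ := by
  obtain ⟨⟨ρm, ρp, hm, hp, htend, hbound⟩, A, hA, hdense⟩ := hf
  choose g hg using hdense
  refine coarseEntropyAt_le y₀ x₀ fun δ hδ => ?_
  set M : ℝ := δ + 2 * A + dist (f x₀) y₀ with hM
  obtain ⟨C, hC⟩ := (Filter.tendsto_atTop.mp htend (M + 1)).exists_forall_of_atTop
  refine ⟨max C 1, lt_of_lt_of_le one_pos (le_max_right _ _), fun R' hR' => ?_⟩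
  have hρp0 : 0 ≤ ρp R' := by
    have h0 : (0:ℝ) ≤ ρp 0 := by
      have := (hbound x₀ x₀).2; simpa using le_trans dist_nonneg this
    exact le_trans h0 (hp (le_of_lt hR'))
  refine ⟨ρp R' + 2 * A + 1, by positivity, fun n => ?_⟩
  refine sepCard_le_sepCard g y₀ x₀ (by positivity) hR'
    (fun y hy => ?_) (fun y y' hy => ?_) (fun y y' hy => ?_) n
  · -- dist x₀ (g y) ≤ max C 1
    by_contra hcon
    push_neg at hcon
    have hCle : C ≤ dist x₀ (g y) := le_trans (le_max_left _ _) (le_of_lt hcon)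
    have : M + 1 ≤ ρm (dist x₀ (g y)) := hC _ hCle
    have hub : ρm (dist x₀ (g y)) ≤ dist (f x₀) (f (g y)) := (hbound x₀ (g y)).1
    have htri : dist (f x₀) (f (g y)) ≤ dist (f x₀) y₀ + dist y₀ y + dist y (f (g y)) := by
      calc dist (f x₀) (f (g y)) ≤ dist (f x₀) y + dist y (f (g y)) := dist_triangle _ _ _
        _ ≤ dist (f x₀) y₀ + dist y₀ y + dist y (f (g y)) := by
            have := dist_triangle (f x₀) y₀ y; linarith
    have := hg y
    rw [hM] at *
    linarith
  · by_contra hcon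
    push_neg at hcon
    have hCle : C ≤ dist (g y) (g y') := le_trans (le_max_left _ _) (le_of_lt hcon)
    have h1 : M + 1 ≤ ρm (dist (g y) (g y')) := hC _ hCle
    have hub : ρm (dist (g y) (g y')) ≤ dist (f (g y)) (f (g y')) := (hbound _ _).1
    have htri : dist (f (g y)) (f (g y')) ≤ dist (f (g y)) y + dist y y' + dist y' (f (g y')) :=
      by have := dist_triangle (f (g y)) y (f (g y'))
         have := dist_triangle y y' (f (g y')); linarith
    have h2 := hg y; have h3 := hg y'
    rw [dist_comm (f (g y)) y] at htri
    have hd : 0 ≤ dist (f x₀) y₀ := dist_nonneg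
    rw [hM] at *
    linarith
  · by_contra hcon
    push_neg at hcon
    have h1 : ρp (dist (g y) (g y')) ≤ ρp R' := hp (le_of_lt hcon)
    have hub : dist (f (g y)) (f (g y')) ≤ ρp (dist (g y) (g y')) := (hbound _ _).2
    have htri : dist y y' ≤ dist y (f (g y)) + dist (f (g y)) (f (g y')) + dist (f (g y')) y' :=
      by have := dist_triangle y (f (g y)) y'
         have := dist_triangle (f (g y)) (f (g y')) y'; linarith
    have h2 := hg y; have h3 := hg y'
    rw [dist_comm (f (g y')) y'] at htri
    linarith

end Aux

/-- Coarsely equivalent metric spaces have the same coarse entropy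
(the coarse entropy of a space is that of its identity map; it is independent of
the basepoint). -/
theorem coarseEntropy_eq_of_coarseEquiv {X Y : Type*} [MetricSpace X] [MetricSpace Y]
    (f : X → Y) (hf : IsCoarseEquiv f) (x₀ : X) (y₀ : Y) :
    coarseEntropyAt (id : X → X) x₀ = coarseEntropyAt (id : Y → Y) y₀ :=
  le_antisymm (dir_fwd f hf.1 x₀ y₀) (dir_bwd f hf x₀ y₀)
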